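/- Let μ be non-increasing, nonnegative, not integrable, and S(x) = ∫₀ˣ μ. Then liminf_{x→∞} x·μ(x)/S(x) = 0 if and only if 1 is a limit point as x→∞ of S(2x)/S(x). -/

import Mathlib

open MeasureTheory Filter

theorem stmt_2 (μ : ℝ → ℝ) (hnn : ∀ x ≥ 0, 0 ≤ μ x)
    (hmono : AntitoneOn μ (Set.Ici 0))
    (hrc : ∀ x ≥ (0:ℝ), ContinuousWithinAt μ (Set.Ici x) x)
    (hnotint : ¬ IntegrableOn μ (Set.Ici 0))
    (S : ℝ → ℝ) (hS : ∀ x, S x = ∫ y in (0:ℝ)..x, μ y)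
    (hSpos : ∀ x > 0, 0 < S x) :
    Filter.liminf (fun x => x * μ x / S x) Filter.atTop = 0 ↔
      ∃ u : ℕ → ℝ, Filter.Tendsto u Filter.atTop Filter.atTop ∧
        Filter.Tendsto (fun n => S (2 * u n) / S (u n)) Filter.atTop (nhds 1) := by
  set F : ℝ → ℝ := fun x => x * μ x / S x with hF
  have hint : ∀ a b : ℝ, 0 ≤ a → 0 ≤ b → IntervalIntegrable μ volume a b := by
    intro a b ha hb
    exact (hmono.mono (fun x hx => le_trans (le_inf ha hb) hx.1)).intervalIntegrable
  -- x μ(x) ≤ S x for x > 0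
  have key1 : ∀ x > (0:ℝ), x * μ x ≤ S x := by
    intro x hx
    rw [hS]
    have h1 : (∫ _ in (0:ℝ)..x, μ x) ≤ ∫ y in (0:ℝ)..x, μ y := by
      apply intervalIntegral.integral_mono_on hx.le intervalIntegrable_const
        (hint 0 x le_rfl hx.le)
      intro y hy
      exact hmono hy.1 hx.le hy.2
    simpa [mul_comm] using h1
  -- u μ(2u) ≤ S(2u) - S u ≤ u μ(u) for u > 0
  have key2 : ∀ u > (0:ℝ), u * μ (2*u) ≤ S (2*u) - S u ∧ S (2*u) - S u ≤ u * μ u := by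
    intro u hu
    have hadd : S u + (∫ y in u..(2*u), μ y) = S (2*u) := by
      rw [hS, hS]
      exact intervalIntegral.integral_add_adjacent_intervals
        (hint 0 u le_rfl hu.le) (hint u (2*u) hu.le (by linarith))
    have hle : u ≤ 2*u := by linarith
    have hup : (∫ y in u..(2*u), μ y) ≤ ∫ _ in u..(2*u), μ u := by
      apply intervalIntegral.integral_mono_on hle (hint u (2*u) hu.le (by linarith))
        intervalIntegrable_const
      intro y hy
      exact hmono hu.le (le_trans hu.le hy.1) hy.1
    have hlo : (∫ _ in u..(2*u), μ (2*u)) ≤ ∫ y in u..(2*u), μ y := by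
      apply intervalIntegral.integral_mono_on hle intervalIntegrable_const
        (hint u (2*u) hu.le (by linarith))
      intro y hy
      exact hmono (le_trans hu.le hy.1) (by positivity : (0:ℝ) ≤ 2*u) hy.2
    rw [intervalIntegral.integral_const, smul_eq_mul] at hup hlo
    constructor
    · nlinarith
    · nlinarith
  -- 0 ≤ F x ≤ 1 for x > 0
  have hF0 : ∀ x > (0:ℝ), 0 ≤ F x := by
    intro x hx
    have := hnn x hx.le
    have := hSpos x hx
    positivity
  have hF1 : ∀ x > (0:ℝ), F x ≤ 1 := by
    intro x hx
    exact div_le_one_of_le₀ (key1 x hx) (hSpos x hx).le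
  have hFev0 : ∀ᶠ x in (atTop : Filter ℝ), 0 ≤ F x := by
    filter_upwards [eventually_gt_atTop 0] with x hx using hF0 x hx
  have hFev1 : ∀ᶠ x in (atTop : Filter ℝ), F x ≤ 1 := by
    filter_upwards [eventually_gt_atTop 0] with x hx using hF1 x hx
  have hbdd : IsBoundedUnder (· ≥ ·) (atTop : Filter ℝ) F := ⟨0, by simpa using hFev0⟩
  have hcob : IsCoboundedUnder (· ≥ ·) (atTop : Filter ℝ) F :=
    IsBoundedUnder.isCoboundedUnder_ge ⟨1, by simpa using hFev1⟩
  -- ratio bounds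
  have hratio_ge : ∀ u > (0:ℝ), 1 ≤ S (2*u) / S u := by
    intro u hu
    have h := (key2 u hu).1
    have hμ := hnn (2*u) (by positivity)
    have hS2 : S u ≤ S (2*u) := by nlinarith
    exact (one_le_div (hSpos u hu)).mpr hS2
  have hratio_le : ∀ u > (0:ℝ), S (2*u) / S u ≤ 1 + F u := by
    intro u hu
    have h := (key2 u hu).2
    have hSu := hSpos u hu
    rw [hF]
    rw [div_le_iff₀ hSu, add_mul, one_mul, div_mul_cancel₀ _ hSu.ne']
    linarith
  have hF2u : ∀ u > (0:ℝ), F (2*u) ≤ 2 * (S (2*u) / S u - 1) := by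
    intro u hu
    have h := (key2 u hu).1
    have hSu := hSpos u hu
    have hS2u := hSpos (2*u) (by positivity)
    have hS2 : S u ≤ S (2*u) := by
      have hμ := hnn (2*u) (by positivity)
      nlinarith
    rw [hF]
    have hnum : 0 ≤ (2*u) * μ (2*u) := by
      have := hnn (2*u) (by positivity)
      positivity
    have h1 : (2*u) * μ (2*u) / S (2*u) ≤ (2*u) * μ (2*u) / S u :=
      div_le_div_of_nonneg_left hnum hSu hS2
    have h2 : (2*u) * μ (2*u) / S u ≤ 2 * (S (2*u) - S u) / S u :=
      (div_le_div_iff_of_pos_right hSu).mpr (by nlinarith)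
    calc (2*u) * μ (2*u) / S (2*u) ≤ (2*u) * μ (2*u) / S u := h1
      _ ≤ 2 * (S (2*u) - S u) / S u := h2
      _ = 2 * (S (2*u) / S u - 1) := by field_simp
  constructor
  · intro hlim
    -- frequently small
    have hfreq : ∀ ε > (0:ℝ), ∃ᶠ x in (atTop : Filter ℝ), F x < ε := by
      intro ε hε
      by_contra hc
      have hev : ∀ᶠ x in (atTop : Filter ℝ), ε ≤ F x := by
        simpa [not_lt] using (not_frequently.mp hc)
      have : ε ≤ liminf F atTop := le_liminf_of_le hcob hev
      rw [hlim] at this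
      linarith
    have hex : ∀ n : ℕ, ∃ x : ℝ, (n:ℝ) + 1 ≤ x ∧ F x < 1/(n+1) := by
      intro n
      have := ((hfreq (1/(n+1)) (by positivity)).and_eventually
        (eventually_ge_atTop ((n:ℝ)+1))).exists
      obtain ⟨x, hx1, hx2⟩ := this
      exact ⟨x, hx2, hx1⟩
    choose u hu1 hu2 using hex
    have hupos : ∀ n, 0 < u n := fun n => lt_of_lt_of_le (by positivity) (hu1 n)
    refine ⟨u, ?_, ?_⟩
    · exact tendsto_atTop_mono (fun n => le_trans (by simp : (n:ℝ) ≤ (n:ℝ)+1) (hu1 n))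
        tendsto_natCast_atTop_atTop
    · have hg : Tendsto (fun _ : ℕ => (1:ℝ)) atTop (nhds 1) := tendsto_const_nhds
      have hh : Tendsto (fun n : ℕ => 1 + 1/((n:ℝ)+1)) atTop (nhds 1) := by
        have h0 := tendsto_one_div_add_atTop_nhds_zero_nat (𝕜 := ℝ)
        have h1 := tendsto_const_nhds (x := (1:ℝ)) (f := (atTop : Filter ℕ)) |>.add h0
        norm_num at h1
        simpa [one_div] using h1
      refine tendsto_of_tendsto_of_tendsto_of_le_of_le hg hh
        (fun n => hratio_ge (u n) (hupos n)) (fun n => ?_)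
      calc S (2 * u n) / S (u n) ≤ 1 + F (u n) := hratio_le (u n) (hupos n)
        _ ≤ 1 + 1/((n:ℝ)+1) := by linarith [hu2 n]
  · rintro ⟨u, hutop, hulim⟩
    have huev : ∀ᶠ n in (atTop : Filter ℕ), 0 < u n := hutop.eventually (eventually_gt_atTop 0)
    -- F(2 u n) → 0
    have hsq : Tendsto (fun n => F (2 * u n)) atTop (nhds 0) := by
      apply tendsto_of_tendsto_of_tendsto_of_le_of_le' (g := fun _ => (0:ℝ))
        (h := fun n => 2 * (S (2 * u n) / S (u n) - 1)) tendsto_const_nhds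
      · have h2 := (hulim.sub_const 1).const_mul (2:ℝ)
        norm_num at h2
        exact h2
      · filter_upwards [huev] with n hn using hF0 (2 * u n) (by positivity)
      · filter_upwards [huev] with n hn using hF2u (u n) hn
    have h2utop : Tendsto (fun n => 2 * u n) atTop atTop :=
      (tendsto_const_mul_atTop_of_pos (by norm_num)).mpr hutop
    have hle0 : liminf F atTop ≤ 0 := by
      apply le_of_forall_pos_le_add
      intro ε hε
      have hfr : ∃ᶠ x in (atTop : Filter ℝ), F x ≤ ε := by
        rw [frequently_atTop]
        intro b
        have h1 : ∀ᶠ n in (atTop : Filter ℕ), b ≤ 2 * u n :=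
          h2utop.eventually (eventually_ge_atTop b)
        have h2 : ∀ᶠ n in (atTop : Filter ℕ), F (2 * u n) ≤ ε :=
          hsq.eventually (eventually_le_nhds hε)
        obtain ⟨n, hn1, hn2⟩ := (h1.and h2).exists
        exact ⟨2 * u n, hn1, hn2⟩
      have := liminf_le_of_frequently_le hfr hbdd
      linarith
    have hge0 : 0 ≤ liminf F atTop := le_liminf_of_le hcob hFev0
    linarith
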